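/- (Theorem: centralized sum variance.) In the UBS sum sampling model with universe rate p satisfying max(ε₁, ε₂) ≤ p ≤ 1 and uniform rates q₁ = ε₁/p, q₂ = ε₂/p, the variance of the sum estimator equals Var(Ĵ_sum) = (1/ε₂ − 1/p)·β₁ + (1/ε₁ − 1/p)·β₂ + (p/(ε₁ε₂) − 1/ε₁ − 1/ε₂ + 1/p)·β₃ + (1/p − 1)·β₄, where β₁ = Σ_v (a v)² μ_v² (b v), β₂ = Σ_v (a v)(μ_v² + σ_v²)(b v)², β₃ = Σ_v (a v)(μ_v² + σ_v²)(b v), and β₄ = Σ_v (a v)² μ_v² (b v)². -/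

import Mathlib

set_option maxRecDepth 2000
set_option maxHeartbeats 1000000

open MeasureTheory ProbabilityTheory

/-- Mean `μ_v` of the weights attached to the tuples of the first table with join key `v`
(`0` when there are no such tuples). -/
noncomputable def wMean {ι : Type*} (a : ι → ℕ) (w : (v : ι) → Fin (a v) → ℝ) (v : ι) : ℝ :=
  (∑ i, w v i) / (a v)

/-- Population variance `σ_v²` of the weights attached to the tuples of the first table with
join key `v` (`0` when there are no such tuples). -/
noncomputable def wVar {ι : Type*} (a : ι → ℕ) (w : (v : ι) → Fin (a v) → ℝ) (v : ι) : ℝ :=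
  (∑ i, (w v i - wMean a w v) ^ 2) / (a v)


section Helpers

variable {Ω : Type*} [MeasurableSpace Ω] {μ : Measure Ω} [IsProbabilityMeasure μ]

lemma aux_integral_01 {f : Ω → ℝ} (hm : Measurable f) (h01 : ∀ ω, f ω = 0 ∨ f ω = 1) :
    ∫ ω, f ω ∂μ = (μ {ω | f ω = 1}).toReal := by
  have hs : MeasurableSet {ω | f ω = 1} := hm (measurableSet_singleton 1)
  have hf : f = Set.indicator {ω | f ω = 1} (fun _ => (1:ℝ)) := by
    funext ω
    rcases h01 ω with h | h <;> simp [Set.indicator_apply, Set.mem_setOf_eq, h]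
  conv_lhs => rw [hf]
  rw [integral_indicator_const _ hs, smul_eq_mul, mul_one]
  rfl

lemma aux_integrable_01 {f : Ω → ℝ} (hm : Measurable f) (h01 : ∀ ω, f ω = 0 ∨ f ω = 1) :
    Integrable f μ := by
  refine (memLp_of_bounded (a := (0:ℝ)) (b := 1) ?_ hm.aestronglyMeasurable 1).integrable le_rfl
  refine Filter.Eventually.of_forall fun ω => ?_
  rcases h01 ω with h | h <;> simp [h, Set.mem_Icc] <;> norm_num

lemma aux_mul01 {x y : ℝ} (hx : x = 0 ∨ x = 1) (hy : y = 0 ∨ y = 1) :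
    x * y = 0 ∨ x * y = 1 := by
  rcases hx with h | h <;> rcases hy with h' | h' <;> simp [h, h']

lemma aux_prod01 {κ : Type*} {f : κ → Ω → ℝ} (h01 : ∀ k ω, f k ω = 0 ∨ f k ω = 1)
    (s : Finset κ) (ω : Ω) : (∏ k ∈ s, f k ω) = 0 ∨ (∏ k ∈ s, f k ω) = 1 := by
  classical
  induction s using Finset.cons_induction with
  | empty => simp
  | cons i s hi ih =>
    rw [Finset.prod_cons]
    exact aux_mul01 (h01 i ω) ih

lemma aux_integral_prod_01 {κ : Type*} {f : κ → Ω → ℝ}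
    (hIndep : iIndepFun f μ)
    (hm : ∀ k, Measurable (f k)) (h01 : ∀ k ω, f k ω = 0 ∨ f k ω = 1)
    (s : Finset κ) :
    ∫ ω, ∏ k ∈ s, f k ω ∂μ = ∏ k ∈ s, ∫ ω, f k ω ∂μ := by
  classical
  induction s using Finset.cons_induction with
  | empty => simp
  | cons i s hi ih =>
    have hIF : IndepFun (f i) (∏ j ∈ s, f j) μ :=
      (hIndep.indepFun_finsetProd_of_notMem hm hi).symm
    have hint1 : Integrable (f i) μ := aux_integrable_01 (hm i) (h01 i)
    have hpa : (∏ j ∈ s, f j) = fun ω => ∏ j ∈ s, f j ω := by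
      funext ω; simp [Finset.prod_apply]
    have hmp : Measurable (∏ j ∈ s, f j) := by
      rw [hpa]; exact Finset.measurable_prod _ fun j _ => hm j
    have hint2 : Integrable (∏ j ∈ s, f j) μ := by
      apply aux_integrable_01 hmp
      intro ω
      have := aux_prod01 h01 s ω
      simpa [Finset.prod_apply] using this
    have key : ∫ ω, (f i * ∏ j ∈ s, f j) ω ∂μ = (∫ ω, f i ω ∂μ) * ∫ ω, (∏ j ∈ s, f j) ω ∂μ :=
      hIF.integral_mul_eq_mul_integral hint1.aestronglyMeasurable hint2.aestronglyMeasurable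
    simp only [Pi.mul_apply, Finset.prod_apply] at key
    simp only [Finset.prod_cons]
    rw [← ih]
    exact key

lemma aux_integral_prod_01_list {κ : Type*} {f : κ → Ω → ℝ}
    (hIndep : iIndepFun f μ)
    (hm : ∀ k, Measurable (f k)) (h01 : ∀ k ω, f k ω = 0 ∨ f k ω = 1)
    (l : List κ) (hl : l.Nodup) :
    ∫ ω, (l.map (fun k => f k ω)).prod ∂μ = (l.map (fun k => ∫ ω, f k ω ∂μ)).prod := by
  classical
  have h1 : ∀ ω, (l.map (fun k => f k ω)).prod = ∏ k ∈ l.toFinset, f k ω := by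
    intro ω; rw [List.prod_toFinset _ hl]
  have h2 : (l.map (fun k => ∫ ω, f k ω ∂μ)).prod = ∏ k ∈ l.toFinset, ∫ ω, f k ω ∂μ := by
    rw [List.prod_toFinset _ hl]
  simp only [h1, h2]
  exact aux_integral_prod_01 hIndep hm h01 l.toFinset

end Helpers

lemma aux_expand (u : ℝ) (hu : u * u = u) {n m : ℕ} (x : Fin n → ℝ) (y : Fin m → ℝ)
    (c : Fin n → ℝ) :
    (u * (∑ i, x i * c i) * (∑ j, y j)) ^ 2
      = ∑ j, ∑ j', ∑ i, ∑ i', (u * (x i * x i') * (y j * y j')) * (c i * c i') := by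
  have h1 : (u * (∑ i, x i * c i) * (∑ j, y j)) ^ 2
      = (u * u) * ((∑ i, x i * c i) * (∑ i, x i * c i)) * ((∑ j, y j) * (∑ j, y j)) := by
    ring
  rw [hu] at h1
  rw [h1, Finset.sum_mul_sum, Finset.sum_mul_sum]
  simp only [Finset.mul_sum, Finset.sum_mul]
  refine Finset.sum_congr rfl fun j _ => Finset.sum_congr rfl fun j' _ =>
    Finset.sum_congr rfl fun i _ => Finset.sum_congr rfl fun i' _ => by ring

lemma aux_factor {n m : ℕ} (p : ℝ) (c : Fin n → Fin n → ℝ) (d : Fin m → Fin m → ℝ)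
    (w : Fin n → ℝ) :
    ∑ j : Fin m, ∑ j' : Fin m, ∑ i : Fin n, ∑ i' : Fin n,
        (p * c i i' * d j j') * (w i * w i')
      = p * (∑ i, ∑ i', c i i' * (w i * w i')) * (∑ j, ∑ j', d j j') := by
  simp only [Finset.mul_sum, Finset.sum_mul]
  refine Finset.sum_congr rfl fun j _ => Finset.sum_congr rfl fun j' _ =>
    Finset.sum_congr rfl fun i _ => Finset.sum_congr rfl fun i' _ => by ring

lemma aux_diag {n : ℕ} (cd : ℝ) (ce : ℝ) (w : Fin n → ℝ) :
    ∑ i, ∑ i', (if i = i' then cd else ce) * (w i * w i')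
      = ce * (∑ i, w i) ^ 2 + (cd - ce) * ∑ i, (w i) ^ 2 := by
  have h : ∀ i i' : Fin n, (if i = i' then cd else ce) * (w i * w i')
      = (if i' = i then (cd - ce) * (w i * w i') else 0) + ce * (w i * w i') := by
    intro i i'
    rcases eq_or_ne i i' with h | h
    · subst h; simp; ring
    · simp [h, Ne.symm h]
  calc ∑ i, ∑ i', (if i = i' then cd else ce) * (w i * w i')
      = ∑ i, ((cd - ce) * (w i * w i) + ∑ i', ce * (w i * w i')) := by
        refine Finset.sum_congr rfl fun i _ => ?_
        rw [Finset.sum_congr rfl fun i' _ => h i i', Finset.sum_add_distrib,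
          Finset.sum_ite_eq' Finset.univ i _]
        simp
    _ = (cd - ce) * (∑ i, (w i) ^ 2) + ce * (∑ i, w i) ^ 2 := by
        rw [Finset.sum_add_distrib]
        congr 1
        · rw [Finset.mul_sum]; exact Finset.sum_congr rfl fun i _ => by ring
        · rw [sq, Finset.sum_mul_sum]; simp only [Finset.mul_sum]
    _ = ce * (∑ i, w i) ^ 2 + (cd - ce) * ∑ i, (w i) ^ 2 := by ring

lemma aux_wsum {ι : Type*} (a : ι → ℕ) (w : (v : ι) → Fin (a v) → ℝ) (v : ι) :
    (a v : ℝ) * wMean a w v = ∑ i, w v i := by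
  rcases Nat.eq_zero_or_pos (a v) with h | h
  · have : IsEmpty (Fin (a v)) := by rw [h]; infer_instance
    simp [wMean, h]
  · have ha : (a v : ℝ) ≠ 0 := Nat.cast_ne_zero.mpr h.ne'
    rw [wMean]; field_simp

lemma aux_wsq {ι : Type*} (a : ι → ℕ) (w : (v : ι) → Fin (a v) → ℝ) (v : ι) :
    (a v : ℝ) * ((wMean a w v) ^ 2 + wVar a w v) = ∑ i, (w v i) ^ 2 := by
  rcases Nat.eq_zero_or_pos (a v) with h | h
  · have : IsEmpty (Fin (a v)) := by rw [h]; infer_instance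
    simp [wMean, wVar, h]
  · have ha : (a v : ℝ) ≠ 0 := Nat.cast_ne_zero.mpr h.ne'
    have hexp : ∑ i, (w v i - wMean a w v) ^ 2
        = (∑ i, (w v i) ^ 2) - (2 * wMean a w v) * (∑ i, w v i)
          + (a v : ℝ) * (wMean a w v) ^ 2 := by
      have hterm : ∀ i : Fin (a v), (w v i - wMean a w v) ^ 2
          = ((w v i) ^ 2 - (2 * wMean a w v) * (w v i)) + (wMean a w v) ^ 2 := fun i => by ring
      rw [Finset.sum_congr rfl fun i _ => hterm i, Finset.sum_add_distrib,
        Finset.sum_sub_distrib, ← Finset.mul_sum, Finset.sum_const, Finset.card_univ,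
        Fintype.card_fin, nsmul_eq_mul]
    have hs : ∑ i, w v i = (a v : ℝ) * wMean a w v := (aux_wsum a w v).symm
    rw [wVar, hexp, hs]
    field_simp
    ring

/-- **Centralized sum variance.**  In the UBS sum sampling model with universe rate `p`
(`max ε₁ ε₂ ≤ p ≤ 1`) and uniform rates `q₁ = ε₁/p`, `q₂ = ε₂/p`,
`Var(Ĵ_sum) = (1/ε₂ − 1/p)·β₁ + (1/ε₁ − 1/p)·β₂ + (p/(ε₁ε₂) − 1/ε₁ − 1/ε₂ + 1/p)·β₃
+ (1/p − 1)·β₄`. -/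
theorem centralized_sum_variance
    {Ω : Type*} [MeasurableSpace Ω] (μ : Measure Ω) [IsProbabilityMeasure μ]
    {ι : Type*} [Fintype ι]
    (a b : ι → ℕ) (w : (v : ι) → Fin (a v) → ℝ) (ε₁ ε₂ p q₁ q₂ : ℝ)
    (hε₁ : 0 < ε₁) (hε₁1 : ε₁ ≤ 1) (hε₂ : 0 < ε₂) (hε₂1 : ε₂ ≤ 1)
    (hplb : max ε₁ ε₂ ≤ p) (hp1 : p ≤ 1)
    (hq₁def : q₁ = ε₁ / p) (hq₂def : q₂ = ε₂ / p)
    (U : ι → Ω → ℝ) (ξ : (v : ι) → Fin (a v) → Ω → ℝ) (η : (v : ι) → Fin (b v) → Ω → ℝ)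
    (hUm : ∀ v, Measurable (U v))
    (hξm : ∀ v i, Measurable (ξ v i))
    (hηm : ∀ v j, Measurable (η v j))
    (hU01 : ∀ v ω, U v ω = 0 ∨ U v ω = 1)
    (hξ01 : ∀ v i ω, ξ v i ω = 0 ∨ ξ v i ω = 1)
    (hη01 : ∀ v j ω, η v j ω = 0 ∨ η v j ω = 1)
    (hUp : ∀ v, μ {ω | U v ω = 1} = ENNReal.ofReal p)
    (hξq : ∀ v i, μ {ω | ξ v i ω = 1} = ENNReal.ofReal q₁)
    (hηq : ∀ v j, μ {ω | η v j ω = 1} = ENNReal.ofReal q₂)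
    (hIndep : iIndepFun
      (Sum.elim (fun v : ι => U v)
        (Sum.elim (fun vi : Σ v : ι, Fin (a v) => ξ vi.1 vi.2)
                  (fun vj : Σ v : ι, Fin (b v) => η vj.1 vj.2))) μ) :
    variance (fun ω => (1 / (p * q₁ * q₂)) *
        ∑ v, U v ω * (∑ i, ξ v i ω * w v i) * (∑ j, η v j ω)) μ
      = (1 / ε₂ - 1 / p) *
          (∑ v, (a v : ℝ) ^ 2 * (wMean a w v) ^ 2 * (b v : ℝ))
        + (1 / ε₁ - 1 / p) *
          (∑ v, (a v : ℝ) * ((wMean a w v) ^ 2 + wVar a w v) * (b v : ℝ) ^ 2)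
        + (p / (ε₁ * ε₂) - 1 / ε₁ - 1 / ε₂ + 1 / p) *
          (∑ v, (a v : ℝ) * ((wMean a w v) ^ 2 + wVar a w v) * (b v : ℝ))
        + (1 / p - 1) *
          (∑ v, (a v : ℝ) ^ 2 * (wMean a w v) ^ 2 * (b v : ℝ) ^ 2) := by
  classical
  -- basic positivity facts
  have hp0 : 0 < p := lt_of_lt_of_le hε₁ (le_trans (le_max_left ε₁ ε₂) hplb)
  have hq₁0 : 0 < q₁ := by rw [hq₁def]; positivity
  have hq₂0 : 0 < q₂ := by rw [hq₂def]; positivity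
  have hε₁eq : ε₁ = p * q₁ := by rw [hq₁def]; field_simp
  have hε₂eq : ε₂ = p * q₂ := by rw [hq₂def]; field_simp
  -- name the independent family
  obtain ⟨F, hFdef⟩ :
      ∃ F : (ι ⊕ ((Σ v : ι, Fin (a v)) ⊕ (Σ v : ι, Fin (b v)))) → Ω → ℝ,
        F = Sum.elim (fun v : ι => U v)
          (Sum.elim (fun vi : Σ v : ι, Fin (a v) => ξ vi.1 vi.2)
                    (fun vj : Σ v : ι, Fin (b v) => η vj.1 vj.2)) := ⟨_, rfl⟩
  rw [← hFdef] at hIndep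
  have hFmeas : ∀ k, Measurable (F k) := by
    rintro (v | vi | vj) <;> simp only [hFdef, Sum.elim_inl, Sum.elim_inr]
    exacts [hUm v, hξm vi.1 vi.2, hηm vj.1 vj.2]
  have hF01 : ∀ k ω, F k ω = 0 ∨ F k ω = 1 := by
    rintro (v | vi | vj) ω <;> simp only [hFdef, Sum.elim_inl, Sum.elim_inr]
    exacts [hU01 v ω, hξ01 vi.1 vi.2 ω, hη01 vj.1 vj.2 ω]
  -- expectations of single indicators
  have hEU : ∀ v, ∫ ω, U v ω ∂μ = p := fun v => by
    rw [aux_integral_01 (hUm v) (hU01 v), hUp v, ENNReal.toReal_ofReal hp0.le]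
  have hEξ : ∀ v i, ∫ ω, ξ v i ω ∂μ = q₁ := fun v i => by
    rw [aux_integral_01 (hξm v i) (hξ01 v i), hξq v i, ENNReal.toReal_ofReal hq₁0.le]
  have hEη : ∀ v j, ∫ ω, η v j ω ∂μ = q₂ := fun v j => by
    rw [aux_integral_01 (hηm v j) (hη01 v j), hηq v j, ENNReal.toReal_ofReal hq₂0.le]
  -- expectation of the basic triple product
  have hE3 : ∀ v (i : Fin (a v)) (j : Fin (b v)),
      ∫ ω, U v ω * (ξ v i ω * η v j ω) ∂μ = p * (q₁ * q₂) := by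
    intro v i j
    have hl := aux_integral_prod_01_list hIndep hFmeas hF01
      ([Sum.inl v, Sum.inr (Sum.inl ⟨v, i⟩), Sum.inr (Sum.inr ⟨v, j⟩)]) (by simp)
    simp only [List.map_cons, List.map_nil, List.prod_cons, List.prod_nil, mul_one,
      hFdef, Sum.elim_inl, Sum.elim_inr] at hl
    rw [hl, hEU v, hEξ v i, hEη v j]
  -- expectation of the general degree-5 monomial
  have hE5 : ∀ v (i i' : Fin (a v)) (j j' : Fin (b v)),
      ∫ ω, U v ω * (ξ v i ω * ξ v i' ω) * (η v j ω * η v j' ω) ∂μ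
        = p * (if i = i' then q₁ else q₁ ^ 2) * (if j = j' then q₂ else q₂ ^ 2) := by
    intro v i i' j j'
    by_cases hii : i = i' <;> by_cases hjj : j = j'
    · subst hii; subst hjj
      rw [if_pos rfl, if_pos rfl]
      have hcongr : (fun ω => U v ω * (ξ v i ω * ξ v i ω) * (η v j ω * η v j ω))
          = fun ω => U v ω * (ξ v i ω * η v j ω) := by
        funext ω
        rcases hξ01 v i ω with h | h <;> rcases hη01 v j ω with h' | h' <;>
          rw [h, h'] <;> ring
      calc ∫ ω, U v ω * (ξ v i ω * ξ v i ω) * (η v j ω * η v j ω) ∂μ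
          = ∫ ω, U v ω * (ξ v i ω * η v j ω) ∂μ := by rw [hcongr]
        _ = p * (q₁ * q₂) := hE3 v i j
        _ = p * q₁ * q₂ := by ring
    · subst hii
      rw [if_pos rfl, if_neg hjj]
      have hcongr : (fun ω => U v ω * (ξ v i ω * ξ v i ω) * (η v j ω * η v j' ω))
          = fun ω => U v ω * (ξ v i ω * (η v j ω * η v j' ω)) := by
        funext ω; rcases hξ01 v i ω with h | h <;> rw [h] <;> ring
      have hl := aux_integral_prod_01_list hIndep hFmeas hF01
        ([Sum.inl v, Sum.inr (Sum.inl ⟨v, i⟩), Sum.inr (Sum.inr ⟨v, j⟩),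
          Sum.inr (Sum.inr ⟨v, j'⟩)]) (by simp [hjj])
      simp only [List.map_cons, List.map_nil, List.prod_cons, List.prod_nil, mul_one,
        hFdef, Sum.elim_inl, Sum.elim_inr] at hl
      calc ∫ ω, U v ω * (ξ v i ω * ξ v i ω) * (η v j ω * η v j' ω) ∂μ
          = ∫ ω, U v ω * (ξ v i ω * (η v j ω * η v j' ω)) ∂μ := by rw [hcongr]
        _ = p * (q₁ * (q₂ * q₂)) := by rw [hl, hEU v, hEξ v i, hEη v j, hEη v j']
        _ = p * q₁ * q₂ ^ 2 := by ring
    · subst hjj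
      rw [if_neg hii, if_pos rfl]
      have hcongr : (fun ω => U v ω * (ξ v i ω * ξ v i' ω) * (η v j ω * η v j ω))
          = fun ω => U v ω * (ξ v i ω * (ξ v i' ω * η v j ω)) := by
        funext ω; rcases hη01 v j ω with h | h <;> rw [h] <;> ring
      have hl := aux_integral_prod_01_list hIndep hFmeas hF01
        ([Sum.inl v, Sum.inr (Sum.inl ⟨v, i⟩), Sum.inr (Sum.inl ⟨v, i'⟩),
          Sum.inr (Sum.inr ⟨v, j⟩)]) (by simp [hii])
      simp only [List.map_cons, List.map_nil, List.prod_cons, List.prod_nil, mul_one,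
        hFdef, Sum.elim_inl, Sum.elim_inr] at hl
      calc ∫ ω, U v ω * (ξ v i ω * ξ v i' ω) * (η v j ω * η v j ω) ∂μ
          = ∫ ω, U v ω * (ξ v i ω * (ξ v i' ω * η v j ω)) ∂μ := by rw [hcongr]
        _ = p * (q₁ * (q₁ * q₂)) := by rw [hl, hEU v, hEξ v i, hEξ v i', hEη v j]
        _ = p * q₁ ^ 2 * q₂ := by ring
    · rw [if_neg hii, if_neg hjj]
      have hcongr : (fun ω => U v ω * (ξ v i ω * ξ v i' ω) * (η v j ω * η v j' ω))
          = fun ω => U v ω * (ξ v i ω * (ξ v i' ω * (η v j ω * η v j' ω))) := by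
        funext ω; ring
      have hl := aux_integral_prod_01_list hIndep hFmeas hF01
        ([Sum.inl v, Sum.inr (Sum.inl ⟨v, i⟩), Sum.inr (Sum.inl ⟨v, i'⟩),
          Sum.inr (Sum.inr ⟨v, j⟩), Sum.inr (Sum.inr ⟨v, j'⟩)]) (by simp [hii, hjj])
      simp only [List.map_cons, List.map_nil, List.prod_cons, List.prod_nil, mul_one,
        hFdef, Sum.elim_inl, Sum.elim_inr] at hl
      calc ∫ ω, U v ω * (ξ v i ω * ξ v i' ω) * (η v j ω * η v j' ω) ∂μ
          = ∫ ω, U v ω * (ξ v i ω * (ξ v i' ω * (η v j ω * η v j' ω))) ∂μ := by rw [hcongr]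
        _ = p * (q₁ * (q₁ * (q₂ * q₂))) := by
            rw [hl, hEU v, hEξ v i, hEξ v i', hEη v j, hEη v j']
        _ = p * q₁ ^ 2 * q₂ ^ 2 := by ring
  -- integrability of monomials
  have hInt3 : ∀ v (i : Fin (a v)) (j : Fin (b v)),
      Integrable (fun ω => U v ω * (ξ v i ω * η v j ω)) μ := by
    intro v i j
    exact aux_integrable_01 ((hUm v).mul ((hξm v i).mul (hηm v j)))
      (fun ω => aux_mul01 (hU01 v ω) (aux_mul01 (hξ01 v i ω) (hη01 v j ω)))
  have hInt5 : ∀ v (i i' : Fin (a v)) (j j' : Fin (b v)),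
      Integrable (fun ω => U v ω * (ξ v i ω * ξ v i' ω) * (η v j ω * η v j' ω)) μ := by
    intro v i i' j j'
    exact aux_integrable_01
      (((hUm v).mul ((hξm v i).mul (hξm v i'))).mul ((hηm v j).mul (hηm v j')))
      (fun ω => aux_mul01 (aux_mul01 (hU01 v ω) (aux_mul01 (hξ01 v i ω) (hξ01 v i' ω)))
        (aux_mul01 (hη01 v j ω) (hη01 v j' ω)))
  -- expectation of X v
  have hEX : ∀ v, ∫ ω, U v ω * (∑ i, ξ v i ω * w v i) * (∑ j, η v j ω) ∂μ
      = p * q₁ * q₂ * ((∑ i, w v i) * (b v : ℝ)) := by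
    intro v
    have hexp : ∀ ω, U v ω * (∑ i, ξ v i ω * w v i) * (∑ j, η v j ω)
        = ∑ j, ∑ i, (U v ω * (ξ v i ω * η v j ω)) * w v i := by
      intro ω
      simp only [Finset.mul_sum, Finset.sum_mul]
      exact Finset.sum_congr rfl fun j _ => Finset.sum_congr rfl fun i _ => by ring
    simp only [hexp]
    rw [integral_finset_sum _ (fun j _ =>
      integrable_finset_sum _ (fun i _ => (hInt3 v i j).mul_const (w v i)))]
    have : ∀ j : Fin (b v), ∫ ω, ∑ i, (U v ω * (ξ v i ω * η v j ω)) * w v i ∂μ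
        = p * (q₁ * q₂) * ∑ i, w v i := by
      intro j
      rw [integral_finset_sum _ (fun i _ => (hInt3 v i j).mul_const (w v i))]
      rw [Finset.mul_sum]
      refine Finset.sum_congr rfl fun i _ => ?_
      rw [integral_mul_const, hE3 v i j]
    rw [Finset.sum_congr rfl fun j _ => this j, Finset.sum_const, Finset.card_univ,
      Fintype.card_fin, nsmul_eq_mul]
    ring
  -- expectation of (X v)^2
  have hEX2 : ∀ v, ∫ ω, (U v ω * (∑ i, ξ v i ω * w v i) * (∑ j, η v j ω)) ^ 2 ∂μ
      = p * (q₁ ^ 2 * (∑ i, w v i) ^ 2 + (q₁ - q₁ ^ 2) * ∑ i, (w v i) ^ 2)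
        * (q₂ ^ 2 * (b v : ℝ) ^ 2 + (q₂ - q₂ ^ 2) * (b v : ℝ)) := by
    intro v
    have hexp : ∀ ω, (U v ω * (∑ i, ξ v i ω * w v i) * (∑ j, η v j ω)) ^ 2
        = ∑ j, ∑ j', ∑ i, ∑ i',
            (U v ω * (ξ v i ω * ξ v i' ω) * (η v j ω * η v j' ω)) * (w v i * w v i') := by
      intro ω
      have hu : U v ω * U v ω = U v ω := by rcases hU01 v ω with h | h <;> rw [h] <;> ring
      exact aux_expand (U v ω) hu (fun i => ξ v i ω) (fun j => η v j ω) (w v)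
    simp only [hexp]
    rw [integral_finset_sum _ (fun j _ => integrable_finset_sum _ (fun j' _ =>
      integrable_finset_sum _ (fun i _ => integrable_finset_sum _ (fun i' _ =>
        (hInt5 v i i' j j').mul_const _))))]
    have step1 : ∀ j j' : Fin (b v),
        ∫ ω, ∑ i, ∑ i',
            (U v ω * (ξ v i ω * ξ v i' ω) * (η v j ω * η v j' ω)) * (w v i * w v i') ∂μ
          = ∑ i, ∑ i', (p * (if i = i' then q₁ else q₁ ^ 2)
              * (if j = j' then q₂ else q₂ ^ 2)) * (w v i * w v i') := by
      intro j j'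
      rw [integral_finset_sum _ (fun i _ => integrable_finset_sum _ (fun i' _ =>
        (hInt5 v i i' j j').mul_const _))]
      refine Finset.sum_congr rfl fun i _ => ?_
      rw [integral_finset_sum _ (fun i' _ => (hInt5 v i i' j j').mul_const _)]
      refine Finset.sum_congr rfl fun i' _ => ?_
      rw [integral_mul_const, hE5 v i i' j j']
    have step0 : ∀ j : Fin (b v),
        ∫ ω, ∑ j', ∑ i, ∑ i',
            (U v ω * (ξ v i ω * ξ v i' ω) * (η v j ω * η v j' ω)) * (w v i * w v i') ∂μ
          = ∑ j', ∑ i, ∑ i', (p * (if i = i' then q₁ else q₁ ^ 2)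
              * (if j = j' then q₂ else q₂ ^ 2)) * (w v i * w v i') := by
      intro j
      rw [integral_finset_sum _ (fun j' _ => integrable_finset_sum _ (fun i _ =>
        integrable_finset_sum _ (fun i' _ => (hInt5 v i i' j j').mul_const _)))]
      exact Finset.sum_congr rfl fun j' _ => step1 j j'
    rw [Finset.sum_congr rfl fun j _ => step0 j]
    rw [aux_factor p (fun i i' => if i = i' then q₁ else q₁ ^ 2)
      (fun j j' => if j = j' then q₂ else q₂ ^ 2) (w v)]
    rw [aux_diag q₁ (q₁ ^ 2) (w v)]
    have hd2 : ∑ j : Fin (b v), ∑ j' : Fin (b v), (if j = j' then q₂ else q₂ ^ 2)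
        = q₂ ^ 2 * (b v : ℝ) ^ 2 + (q₂ - q₂ ^ 2) * (b v : ℝ) := by
      have hd := aux_diag q₂ (q₂ ^ 2) (fun _ : Fin (b v) => (1 : ℝ))
      simpa [Finset.sum_const, Finset.card_univ] using hd
    rw [hd2]
  -- bound and Memℒp
  have hbd : ∀ v ω, |U v ω * (∑ i, ξ v i ω * w v i) * (∑ j, η v j ω)|
      ≤ (∑ i, |w v i|) * (b v : ℝ) := by
    intro v ω
    have h1 : |U v ω| ≤ 1 := by rcases hU01 v ω with h | h <;> simp [h]
    have h2 : |∑ i, ξ v i ω * w v i| ≤ ∑ i, |w v i| := by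
      refine (Finset.abs_sum_le_sum_abs _ _).trans (Finset.sum_le_sum fun i _ => ?_)
      rw [abs_mul]
      rcases hξ01 v i ω with h | h <;> simp [h]
    have h3 : |∑ j, η v j ω| ≤ (b v : ℝ) := by
      refine (Finset.abs_sum_le_sum_abs _ _).trans ?_
      calc ∑ j, |η v j ω| ≤ ∑ _j : Fin (b v), (1 : ℝ) :=
            Finset.sum_le_sum fun j _ => by rcases hη01 v j ω with h | h <;> simp [h]
        _ = (b v : ℝ) := by simp
    calc |U v ω * (∑ i, ξ v i ω * w v i) * (∑ j, η v j ω)|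
        = |U v ω| * |∑ i, ξ v i ω * w v i| * |∑ j, η v j ω| := by rw [abs_mul, abs_mul]
      _ ≤ 1 * (∑ i, |w v i|) * (b v : ℝ) := by
          have hw : (0:ℝ) ≤ ∑ i, |w v i| := Finset.sum_nonneg fun i _ => abs_nonneg _
          exact mul_le_mul (mul_le_mul h1 h2 (abs_nonneg _) zero_le_one) h3 (abs_nonneg _)
            (by positivity)
      _ = (∑ i, |w v i|) * (b v : ℝ) := by ring
  have hXmeas : ∀ v, Measurable
      (fun ω => U v ω * (∑ i, ξ v i ω * w v i) * (∑ j, η v j ω)) := fun v =>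
    ((hUm v).mul (Finset.measurable_sum _ fun i _ => (hξm v i).mul_const _)).mul
      (Finset.measurable_sum _ fun j _ => hηm v j)
  have hMem : ∀ v, MemLp (fun ω => U v ω * (∑ i, ξ v i ω * w v i) * (∑ j, η v j ω)) 2 μ := by
    intro v
    refine memLp_of_bounded (a := -((∑ i, |w v i|) * (b v : ℝ)))
      (b := (∑ i, |w v i|) * (b v : ℝ)) ?_ (hXmeas v).aestronglyMeasurable 2
    exact Filter.Eventually.of_forall fun ω => abs_le.mp (hbd v ω)
  -- pairwise independence
  have hPair : ∀ v u : ι, v ≠ u →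
      IndepFun (fun ω => U v ω * (∑ i, ξ v i ω * w v i) * (∑ j, η v j ω))
        (fun ω => U u ω * (∑ i, ξ u i ω * w u i) * (∑ j, η u j ω)) μ := by
    intro v u hvu
    obtain ⟨S, hSdef⟩ :
        ∃ S : ι → Finset (ι ⊕ ((Σ t : ι, Fin (a t)) ⊕ (Σ t : ι, Fin (b t)))),
          S = fun t =>
            ({Sum.inl t} ∪ Finset.univ.image (fun i : Fin (a t) => Sum.inr (Sum.inl ⟨t, i⟩))
              ∪ Finset.univ.image (fun j : Fin (b t) => Sum.inr (Sum.inr ⟨t, j⟩))) := ⟨_, rfl⟩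
    have hmemU : ∀ t, Sum.inl t ∈ S t := by intro t; simp [hSdef]
    have hmemξ : ∀ t (i : Fin (a t)), Sum.inr (Sum.inl ⟨t, i⟩) ∈ S t := by
      intro t i; simp [hSdef]
    have hmemη : ∀ t (j : Fin (b t)), Sum.inr (Sum.inr ⟨t, j⟩) ∈ S t := by
      intro t j; simp [hSdef]
    have hdisj : Disjoint (S v) (S u) := by
      rw [Finset.disjoint_left]
      intro k hk hk'
      simp only [hSdef, Finset.mem_union, Finset.mem_singleton, Finset.mem_image,
        Finset.mem_univ, true_and] at hk hk'
      rcases hk with (rfl | ⟨i, rfl⟩) | ⟨j, rfl⟩ <;>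
        rcases hk' with (h | ⟨i', h⟩) | ⟨j', h⟩
      · exact hvu (Sum.inl_injective h)
      · exact nomatch h
      · exact nomatch h
      · exact nomatch h
      · injection h with h1
        injection h1 with h2
        exact hvu (congrArg Sigma.fst h2).symm
      · injection h with h1
        exact nomatch h1
      · exact nomatch h
      · injection h with h1
        exact nomatch h1
      · injection h with h1
        injection h1 with h2
        exact hvu (congrArg Sigma.fst h2).symm
    set Φ : (t : ι) → ((k : (S t : Finset _)) → ℝ) → ℝ := fun t g =>
      g ⟨Sum.inl t, hmemU t⟩
        * (∑ i, g ⟨Sum.inr (Sum.inl ⟨t, i⟩), hmemξ t i⟩ * w t i)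
        * (∑ j, g ⟨Sum.inr (Sum.inr ⟨t, j⟩), hmemη t j⟩) with hΦdef
    have hΦmeas : ∀ t, Measurable (Φ t) := by
      intro t
      rw [hΦdef]
      apply Measurable.mul
      · apply Measurable.mul
        · exact measurable_pi_apply _
        · exact Finset.measurable_sum _ fun i _ => (measurable_pi_apply _).mul_const _
      · exact Finset.measurable_sum _ fun j _ => measurable_pi_apply _
    have hcomp : ∀ t, (fun ω => U t ω * (∑ i, ξ t i ω * w t i) * (∑ j, η t j ω))
        = (Φ t) ∘ (fun ω (k : (S t : Finset _)) => F k ω) := by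
      intro t
      funext ω
      simp [hΦdef, hFdef, Function.comp]
    rw [hcomp v, hcomp u]
    exact (hIndep.indepFun_finset (S v) (S u) hdisj hFmeas).comp (hΦmeas v) (hΦmeas u)
  -- variance of each X v
  have hVar : ∀ v, variance (fun ω => U v ω * (∑ i, ξ v i ω * w v i) * (∑ j, η v j ω)) μ
      = p * (q₁ ^ 2 * (∑ i, w v i) ^ 2 + (q₁ - q₁ ^ 2) * ∑ i, (w v i) ^ 2)
          * (q₂ ^ 2 * (b v : ℝ) ^ 2 + (q₂ - q₂ ^ 2) * (b v : ℝ))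
        - (p * q₁ * q₂ * ((∑ i, w v i) * (b v : ℝ))) ^ 2 := by
    intro v
    rw [variance_eq_sub (hMem v)]
    have hpow : ((fun ω => U v ω * (∑ i, ξ v i ω * w v i) * (∑ j, η v j ω)) ^ 2)
        = fun ω => (U v ω * (∑ i, ξ v i ω * w v i) * (∑ j, η v j ω)) ^ 2 := rfl
    rw [hpow, hEX2 v, hEX v]
  -- put everything together
  rw [variance_const_mul]
  have hsum : (fun ω => ∑ v, U v ω * (∑ i, ξ v i ω * w v i) * (∑ j, η v j ω))
      = ∑ v, (fun ω => U v ω * (∑ i, ξ v i ω * w v i) * (∑ j, η v j ω)) := by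
    funext ω
    rw [Finset.sum_apply]
  rw [hsum, IndepFun.variance_sum (fun v _ => hMem v)
    (fun v _ u _ hvu => hPair v u hvu)]
  rw [Finset.mul_sum, Finset.sum_congr rfl fun v _ => by rw [hVar v]]
  have hper : ∀ v : ι, (1 / (p * q₁ * q₂)) ^ 2 *
      (p * (q₁ ^ 2 * (∑ i, w v i) ^ 2 + (q₁ - q₁ ^ 2) * ∑ i, (w v i) ^ 2)
          * (q₂ ^ 2 * (b v : ℝ) ^ 2 + (q₂ - q₂ ^ 2) * (b v : ℝ))
        - (p * q₁ * q₂ * ((∑ i, w v i) * (b v : ℝ))) ^ 2)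
      = (1 / ε₂ - 1 / p) * ((a v : ℝ) ^ 2 * (wMean a w v) ^ 2 * (b v : ℝ))
        + (1 / ε₁ - 1 / p) * ((a v : ℝ) * ((wMean a w v) ^ 2 + wVar a w v) * (b v : ℝ) ^ 2)
        + (p / (ε₁ * ε₂) - 1 / ε₁ - 1 / ε₂ + 1 / p)
            * ((a v : ℝ) * ((wMean a w v) ^ 2 + wVar a w v) * (b v : ℝ))
        + (1 / p - 1) * ((a v : ℝ) ^ 2 * (wMean a w v) ^ 2 * (b v : ℝ) ^ 2) := by
    intro v
    have h1 : (a v : ℝ) ^ 2 * (wMean a w v) ^ 2 = (∑ i, w v i) ^ 2 := by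
      rw [← aux_wsum a w v]; ring
    have h2 : (a v : ℝ) * ((wMean a w v) ^ 2 + wVar a w v) = ∑ i, (w v i) ^ 2 :=
      aux_wsq a w v
    rw [h1, h2, hε₁eq, hε₂eq]
    field_simp
    ring
  rw [Finset.sum_congr rfl fun v _ => hper v]
  rw [Finset.sum_add_distrib, Finset.sum_add_distrib, Finset.sum_add_distrib,
    ← Finset.mul_sum, ← Finset.mul_sum, ← Finset.mul_sum, ← Finset.mul_sum]
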